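/- Let F be a set functor and Λ a lax extension of F. Then: (1) for every relation r : X ⇸ Y with domain inclusion d_r : dom(r) ↪ X, the image of F d_r is contained in the domain of Λr; (2) if Λ is normal, then Λ(r°) = (Λr)° for every difunctional relation r : X ⇸ Y; (3) if Λ is normal and F preserves empty intersections, then Λ(j · i°) = Fj · (Fi)° for all injective functions i : A → X and j : A → Y. -/

import Mathlib

open CategoryTheory Function

universe u

/-- Applicative composition of relations: `relComp s r = s · r`. -/
def relComp {X Y Z : Type u} (s : Y → Z → Prop) (r : X → Y → Prop) : X → Z → Prop :=
  fun x z => ∃ y, r x y ∧ s y z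

/-- Converse of a relation. -/
def relConv {X Y : Type u} (r : X → Y → Prop) : Y → X → Prop := fun y x => r x y

/-- Graph relation of a function. -/
def fgraph {X Y : Type u} (f : X → Y) : X → Y → Prop := fun x y => f x = y

/-- An `F`-relator: a monotone assignment of relations `F X ⇸ F Y` to relations `X ⇸ Y`. -/
structure Relator (F : Type u ⥤ Type u) : Type (u + 1) where
  map : ∀ {X Y : Type u}, (X → Y → Prop) → (F.obj X → F.obj Y → Prop)
  mono : ∀ {X Y : Type u} {r s : X → Y → Prop}, (∀ x y, r x y → s x y) →
    ∀ u v, map r u v → map s u v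

/-- `f` is a coalgebra homomorphism from `(X, α)` to `(Y, β)`. -/
def IsCoalgHom (F : Type u ⥤ Type u) {X Y : Type u} (α : X → F.obj X) (β : Y → F.obj Y)
    (f : X → Y) : Prop :=
  ∀ x, β (f x) = F.map (TypeCat.ofHom f) (α x)

/-- Behavioural equivalence of states. -/
def BehEq (F : Type u ⥤ Type u) {X Y : Type u} (α : X → F.obj X) (β : Y → F.obj Y)
    (x : X) (y : Y) : Prop :=
  ∃ (Z : Type u) (γ : Z → F.obj Z) (f : X → Z) (g : Y → Z),
    IsCoalgHom F α γ f ∧ IsCoalgHom F β γ g ∧ f x = g y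

/-- `r` is a `Λ`-simulation from `(X, α)` to `(Y, β)`: `r ≤ β° · Λr · α`. -/
def IsSimulation {F : Type u ⥤ Type u} (Λ : Relator F) {X Y : Type u}
    (α : X → F.obj X) (β : Y → F.obj Y) (r : X → Y → Prop) : Prop :=
  ∀ x y, r x y → Λ.map r (α x) (β y)

/-- `x` and `y` are `Λ`-similar: related by some `Λ`-simulation. -/
def LaxSimilar {F : Type u ⥤ Type u} (Λ : Relator F) {X Y : Type u}
    (α : X → F.obj X) (β : Y → F.obj Y) (x : X) (y : Y) : Prop :=
  ∃ r, IsSimulation Λ α β r ∧ r x y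

/-- `Λ` is a relax extension of `F`: `Ff ≤ Λf` and `(Ff)° ≤ Λ(f°)` for all functions `f`. -/
def IsRelaxExtension (F : Type u ⥤ Type u) (Λ : Relator F) : Prop :=
  ∀ {X Y : Type u} (f : X → Y),
    (∀ (u : F.obj X) (v : F.obj Y), F.map (TypeCat.ofHom f) u = v → Λ.map (fgraph f) u v) ∧
    (∀ (v : F.obj Y) (u : F.obj X), F.map (TypeCat.ofHom f) u = v → Λ.map (relConv (fgraph f)) v u)

/-- `Λ` is a lax extension of `F`: a relax extension with `Λs · Λr ≤ Λ(s · r)`. -/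
def IsLaxExtension (F : Type u ⥤ Type u) (Λ : Relator F) : Prop :=
  IsRelaxExtension F Λ ∧
    ∀ {X Y Z : Type u} (r : X → Y → Prop) (s : Y → Z → Prop)
      (u : F.obj X) (w : F.obj Z),
      relComp (Λ.map s) (Λ.map r) u w → Λ.map (relComp s r) u w

/-- `Λ` is normal: `Λ1_X = 1_{FX}` for every set `X`. -/
def IsNormal (F : Type u ⥤ Type u) (Λ : Relator F) : Prop :=
  ∀ (X : Type u) (u v : F.obj X), Λ.map (@Eq X) u v ↔ u = v

/-- A relation is difunctional if it is of the form `g° · f` for functions `f`, `g`. -/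
def IsDifunctional {X Y : Type u} (r : X → Y → Prop) : Prop :=
  ∃ (Z : Type u) (f : X → Z) (g : Y → Z), ∀ x y, r x y ↔ f x = g y

/-- The commutative square `f ∘ p = g ∘ q` is a pullback square (in `Set`). -/
def IsPullbackSq {P X B A : Type u} (p : P → X) (q : P → B) (f : X → A) (g : B → A) : Prop :=
  (∀ w, f (p w) = g (q w)) ∧ ∀ x b, f x = g b → ∃! w, p w = x ∧ q w = b

/-- `F` preserves empty intersections: it preserves the pullback of any two
injections with disjoint images. -/
def PreservesEmptyIntersections (F : Type u ⥤ Type u) : Prop :=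
  ∀ {P A B X : Type u} (p : P → A) (q : P → B) (i : A → X) (j : B → X),
    Function.Injective i → Function.Injective j → (∀ a b, i a ≠ j b) →
    IsPullbackSq p q i j → IsPullbackSq (F.map (TypeCat.ofHom p)) (F.map (TypeCat.ofHom q)) (F.map (TypeCat.ofHom i)) (F.map (TypeCat.ofHom j))

section StmtTenHelpers

variable {F : Type u ⥤ Type u} {Λ : Relator F}

private lemma Fcomp' (F : Type u ⥤ Type u) {X Y Z : Type u} (f : X → Y) (g : Y → Z)
    (x : F.obj X) : F.map (TypeCat.ofHom (fun a => g (f a))) x = F.map (TypeCat.ofHom g) (F.map (TypeCat.ofHom f) x) :=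
  FunctorToTypes.map_comp_apply F (TypeCat.ofHom f) (TypeCat.ofHom g) x

private lemma Fretr' {X Y : Type u} (f : X → Y) (ρ : Y → X) (hρ : ∀ x, ρ (f x) = x) :
    Function.Injective (F.map (TypeCat.ofHom f)) := by
  intro a b h
  have := congrArg (F.map (TypeCat.ofHom ρ)) h
  rw [← Fcomp' F f ρ, ← Fcomp' F f ρ] at this
  have he : TypeCat.ofHom (fun a => ρ (f a)) = (𝟙 X : X ⟶ X) := congrArg TypeCat.ofHom (funext fun x => hρ x)
  rwa [he, FunctorToTypes.map_id_apply, FunctorToTypes.map_id_apply] at this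

private lemma lam_graph (hlax : IsLaxExtension F Λ) {X Y : Type u} (f : X → Y) (u : F.obj X) :
    Λ.map (fgraph f) u (F.map (TypeCat.ofHom f) u) := (hlax.1 f).1 u _ rfl

private lemma lam_conv_graph (hlax : IsLaxExtension F Λ) {X Y : Type u} (f : X → Y)
    (u : F.obj X) : Λ.map (relConv (fgraph f)) (F.map (TypeCat.ofHom f) u) u := (hlax.1 f).2 _ u rfl

private lemma lam_graph_eq (hlax : IsLaxExtension F Λ) (hn : IsNormal F Λ) {X Y : Type u}
    (f : X → Y) (u : F.obj X) (v : F.obj Y) (h : Λ.map (fgraph f) u v) : F.map (TypeCat.ofHom f) u = v := by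
  have h2 := hlax.2 (relConv (fgraph f)) (fgraph f) (F.map (TypeCat.ofHom f) u) v
    ⟨u, lam_conv_graph hlax f u, h⟩
  have h3 : Λ.map (@Eq Y) (F.map (TypeCat.ofHom f) u) v :=
    Λ.mono (fun y y' hy => by obtain ⟨x, hx, hx'⟩ := hy; exact hx.symm.trans hx') _ _ h2
  exact (hn Y _ _).1 h3

private lemma lam_difunc (hlax : IsLaxExtension F Λ) (hn : IsNormal F Λ) {X Y Z : Type u}
    (f : X → Z) (g : Y → Z) (r : X → Y → Prop) (hr : ∀ x y, r x y ↔ f x = g y)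
    (u : F.obj X) (v : F.obj Y) :
    Λ.map r u v ↔ F.map (TypeCat.ofHom f) u = F.map (TypeCat.ofHom g) v := by
  constructor
  · intro h
    have h1 : Λ.map (relComp (fgraph g) r) u (F.map (TypeCat.ofHom g) v) :=
      hlax.2 r (fgraph g) u _ ⟨v, h, lam_graph hlax g v⟩
    have h2 : Λ.map (fgraph f) u (F.map (TypeCat.ofHom g) v) :=
      Λ.mono (fun x z hz => by
        obtain ⟨y, hxy, hyz⟩ := hz; exact ((hr x y).1 hxy).trans hyz) _ _ h1
    exact lam_graph_eq hlax hn f _ _ h2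
  · intro h
    have h1 : Λ.map (relComp (relConv (fgraph g)) (fgraph f)) u v :=
      hlax.2 _ _ u v ⟨F.map (TypeCat.ofHom f) u, lam_graph hlax f u, by
        rw [h]; exact lam_conv_graph hlax g v⟩
    exact Λ.mono (fun x y hz => by
      obtain ⟨z, hz1, hz2⟩ := hz; exact (hr x y).2 (hz1.trans hz2.symm)) _ _ h1

end StmtTenHelpers

/-- For a lax extension `Λ` of `F`:
(1) for every relation `r : X ⇸ Y` with domain inclusion `d_r : dom(r) ↪ X`, the
image of `F d_r` is contained in the domain of `Λr`;
(2) if `Λ` is normal then `Λ(r°) = (Λr)°` for every difunctional `r`;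
(3) if `Λ` is normal and `F` preserves empty intersections then
`Λ(j · i°) = Fj · (Fi)°` for all injective `i : A → X`, `j : A → Y`. -/

theorem stmt10 (F : Type u ⥤ Type u) (Λ : Relator F) (hlax : IsLaxExtension F Λ) :
    (∀ (X Y : Type u) (r : X → Y → Prop) (w : F.obj {x : X // ∃ y, r x y}),
      ∃ v : F.obj Y, Λ.map r (F.map (TypeCat.ofHom (Subtype.val : {x : X // ∃ y, r x y} → X)) w) v)
    ∧
    (IsNormal F Λ →
      ∀ (X Y : Type u) (r : X → Y → Prop), IsDifunctional r →
        ∀ (v : F.obj Y) (u : F.obj X), Λ.map (relConv r) v u ↔ Λ.map r u v)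
    ∧
    (IsNormal F Λ → PreservesEmptyIntersections F →
      ∀ (A X Y : Type u) (i : A → X) (j : A → Y),
        Function.Injective i → Function.Injective j →
        ∀ (u : F.obj X) (v : F.obj Y),
          Λ.map (fun x y => ∃ a, i a = x ∧ j a = y) u v ↔
            ∃ w : F.obj A, F.map (TypeCat.ofHom i) w = u ∧ F.map (TypeCat.ofHom j) w = v) := by
  classical
  refine ⟨?_, ?_, ?_⟩
  · -- Part 1
    intro X Y r w
    let D := {x : X // ∃ y, r x y}
    let c : D → Y := fun d => d.2.choose
    refine ⟨F.map (TypeCat.ofHom c) w, ?_⟩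
    have h1 := hlax.2 (relConv (fgraph (Subtype.val : D → X))) (fgraph c)
      (F.map (TypeCat.ofHom (Subtype.val : D → X)) w) (F.map (TypeCat.ofHom c) w)
      ⟨w, lam_conv_graph hlax _ w, lam_graph hlax c w⟩
    refine Λ.mono (fun x y hy => ?_) _ _ h1
    obtain ⟨d, hd1, hd2⟩ := hy
    have hd1' : d.val = x := hd1
    have hd2' : c d = y := hd2
    rw [← hd1', ← hd2']
    exact d.2.choose_spec
  · -- Part 2
    rintro hn X Y r ⟨Z, f, g, hr⟩ v u
    rw [lam_difunc hlax hn f g r hr u v,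
      lam_difunc hlax hn g f (relConv r)
        (fun y x => by simpa [relConv, eq_comm] using hr x y) v u]
    exact eq_comm
  · -- Part 3
    intro hn hpe A X Y i j hi hj u v
    set r : X → Y → Prop := fun x y => ∃ a, i a = x ∧ j a = y with hrdef
    let Z := X ⊕ {y : Y // ¬ ∃ a, j a = y}
    let f : X → Z := Sum.inl
    let g : Y → Z := fun y => if h : ∃ a, j a = y then Sum.inl (i h.choose) else Sum.inr ⟨y, h⟩
    have hgj : ∀ a, g (j a) = Sum.inl (i a) := by
      intro a
      have h : ∃ a', j a' = j a := ⟨a, rfl⟩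
      have e : g (j a) = Sum.inl (i h.choose) := dif_pos h
      rw [e]
      exact congrArg Sum.inl (congrArg i (hj h.choose_spec))
    have hfg : ∀ x y, r x y ↔ f x = g y := by
      intro x y
      constructor
      · rintro ⟨a, rfl, rfl⟩
        exact (hgj a).symm
      · intro h
        by_cases hy : ∃ a, j a = y
        · have hgy : g y = Sum.inl (i hy.choose) := dif_pos hy
          rw [hgy] at h
          exact ⟨hy.choose, (Sum.inl.inj h).symm, hy.choose_spec⟩
        · have hgy : g y = Sum.inr ⟨y, hy⟩ := dif_neg hy
          rw [hgy] at h
          exact absurd h (Sum.inl_ne_inr)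
    have hginj : Function.Injective g := by
      intro y1 y2 h
      by_cases h1 : ∃ a, j a = y1 <;> by_cases h2 : ∃ a, j a = y2
      · rw [show g y1 = Sum.inl (i h1.choose) from dif_pos h1,
          show g y2 = Sum.inl (i h2.choose) from dif_pos h2] at h
        have := hi (Sum.inl.inj h)
        rw [← h1.choose_spec, ← h2.choose_spec, this]
      · rw [show g y1 = Sum.inl (i h1.choose) from dif_pos h1,
          show g y2 = Sum.inr ⟨y2, h2⟩ from dif_neg h2] at h
        exact absurd h (Sum.inl_ne_inr)
      · rw [show g y1 = Sum.inr ⟨y1, h1⟩ from dif_neg h1,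
          show g y2 = Sum.inl (i h2.choose) from dif_pos h2] at h
        exact absurd h (Sum.inr_ne_inl)
      · rw [show g y1 = Sum.inr ⟨y1, h1⟩ from dif_neg h1,
          show g y2 = Sum.inr ⟨y2, h2⟩ from dif_neg h2] at h
        exact congrArg Subtype.val (Sum.inr.inj h)
    have key := lam_difunc hlax hn f g r hfg u v
    constructor
    · intro h
      have hz : F.map (TypeCat.ofHom f) u = F.map (TypeCat.ofHom g) v := key.1 h
      by_cases hA : Nonempty A
      · obtain ⟨a0⟩ := hA
        let σ : Z → A := fun z => match z with
          | Sum.inl x => if h : ∃ a, i a = x then h.choose else a0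
          | Sum.inr _ => a0
        have hσi : ∀ a, σ (Sum.inl (i a)) = a := by
          intro a
          have h : ∃ a', i a' = i a := ⟨a, rfl⟩
          have e : σ (Sum.inl (i a)) = if h' : ∃ a', i a' = i a then h'.choose else a0 := rfl
          rw [e, dif_pos h]
          exact hi h.choose_spec
        let p : Z → Z := fun z => match z with
          | Sum.inl x => Sum.inl x
          | Sum.inr _ => Sum.inl (i a0)
        let q : Z → Z := fun z => match z with
          | Sum.inl x => Sum.inl (i (σ (Sum.inl x)))
          | Sum.inr y' => Sum.inr y'
        have hpf : ∀ x, p (f x) = f x := fun x => rfl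
        have hqg : ∀ y, q (g y) = g y := by
          intro y
          by_cases hy : ∃ a, j a = y
          · have e1 : g y = Sum.inl (i hy.choose) := dif_pos hy
            have e2 : q (Sum.inl (i hy.choose)) = Sum.inl (i (σ (Sum.inl (i hy.choose)))) := rfl
            rw [e1, e2, hσi]
          · have e1 : g y = Sum.inr ⟨y, hy⟩ := dif_neg hy
            rw [e1]
        have hqp : ∀ z, q (p z) = f (i (σ z)) := by
          intro z
          cases z with
          | inl x => rfl
          | inr y' =>
            show Sum.inl (i (σ (Sum.inl (i a0)))) = Sum.inl (i a0)
            rw [hσi a0]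
        -- z0 := F f u is fixed by F p and F q
        have hFp : F.map (TypeCat.ofHom p) (F.map (TypeCat.ofHom f) u) = F.map (TypeCat.ofHom f) u := by
          rw [← Fcomp' F f p]
        have hFq : F.map (TypeCat.ofHom q) (F.map (TypeCat.ofHom g) v) = F.map (TypeCat.ofHom g) v := by
          rw [← Fcomp' F g q]
          exact congrArg (fun h => F.map (TypeCat.ofHom h) v) (funext hqg)
        have ecomp : F.map (TypeCat.ofHom (fun z => f (i (σ z)))) (F.map (TypeCat.ofHom f) u) =
            F.map (TypeCat.ofHom f) (F.map (TypeCat.ofHom i) (F.map (TypeCat.ofHom σ) (F.map (TypeCat.ofHom f) u))) :=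
          (Fcomp' F σ (fun a => f (i a)) (F.map (TypeCat.ofHom f) u)).trans
            (Fcomp' F i f (F.map (TypeCat.ofHom σ) (F.map (TypeCat.ofHom f) u)))
        have hmain : F.map (TypeCat.ofHom f) (F.map (TypeCat.ofHom i) (F.map (TypeCat.ofHom σ) (F.map (TypeCat.ofHom f) u))) = F.map (TypeCat.ofHom f) u := by
          have e1 : F.map (TypeCat.ofHom (fun z => q (p z))) (F.map (TypeCat.ofHom f) u) = F.map (TypeCat.ofHom f) u := by
            rw [Fcomp' F p q, hFp, hz, hFq]
          have e2 : (fun z => q (p z)) = (fun z => f (i (σ z))) := funext hqp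
          rw [e2] at e1
          exact ecomp.symm.trans e1
        have hfinj : Function.Injective (F.map (TypeCat.ofHom f)) :=
          Fretr' f (fun z => match z with | Sum.inl x => x | Sum.inr _ => i a0) (fun _ => rfl)
        have hginj' : Function.Injective (F.map (TypeCat.ofHom g)) := by
          refine Fretr' g (fun z => match z with
            | Sum.inl x => j (σ (Sum.inl x))
            | Sum.inr y' => y'.val) ?_
          intro y
          by_cases hy : ∃ a, j a = y
          · rw [show g y = Sum.inl (i hy.choose) from dif_pos hy]
            show j (σ (Sum.inl (i hy.choose))) = y
            rw [hσi]
            exact hy.choose_spec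
          · rw [show g y = Sum.inr ⟨y, hy⟩ from dif_neg hy]
        refine ⟨F.map (TypeCat.ofHom σ) (F.map (TypeCat.ofHom f) u), hfinj hmain, hginj' ?_⟩
        have e4 : F.map (TypeCat.ofHom (fun z => g (j (σ z)))) (F.map (TypeCat.ofHom f) u) =
            F.map (TypeCat.ofHom g) (F.map (TypeCat.ofHom j) (F.map (TypeCat.ofHom σ) (F.map (TypeCat.ofHom f) u))) :=
          (Fcomp' F σ (fun a => g (j a)) (F.map (TypeCat.ofHom f) u)).trans
            (Fcomp' F j g (F.map (TypeCat.ofHom σ) (F.map (TypeCat.ofHom f) u)))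
        have e5 : (fun z : Z => g (j (σ z))) = (fun z => f (i (σ z))) :=
          funext fun z => hgj (σ z)
        have e6 : F.map (TypeCat.ofHom (fun z : Z => g (j (σ z)))) (F.map (TypeCat.ofHom f) u) =
            F.map (TypeCat.ofHom (fun z => f (i (σ z)))) (F.map (TypeCat.ofHom f) u) := by rw [e5]
        calc F.map (TypeCat.ofHom g) (F.map (TypeCat.ofHom j) (F.map (TypeCat.ofHom σ) (F.map (TypeCat.ofHom f) u)))
            = F.map (TypeCat.ofHom (fun z : Z => g (j (σ z)))) (F.map (TypeCat.ofHom f) u) := e4.symm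
          _ = F.map (TypeCat.ofHom (fun z => f (i (σ z)))) (F.map (TypeCat.ofHom f) u) := e6
          _ = F.map (TypeCat.ofHom f) (F.map (TypeCat.ofHom i) (F.map (TypeCat.ofHom σ) (F.map (TypeCat.ofHom f) u))) := ecomp
          _ = F.map (TypeCat.ofHom f) u := hmain
          _ = F.map (TypeCat.ofHom g) v := hz
      · -- A is empty
        have hdisj : ∀ x y, f x ≠ g y := by
          intro x y
          have hy : ¬ ∃ a, j a = y := fun ⟨a, _⟩ => hA ⟨a⟩
          rw [show g y = Sum.inr ⟨y, hy⟩ from dif_neg hy]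
          exact Sum.inl_ne_inr
        have hsq : IsPullbackSq i j f g :=
          ⟨fun a => absurd ⟨a⟩ hA, fun x y hxy => absurd hxy (hdisj x y)⟩
        have hpres := hpe i j f g Sum.inl_injective hginj hdisj hsq
        obtain ⟨w, hw, -⟩ := hpres.2 u v hz
        exact ⟨w, hw.1, hw.2⟩
    · rintro ⟨w, hw1, hw2⟩
      have h1 := hlax.2 (relConv (fgraph i)) (fgraph j) u v
        ⟨w, by rw [← hw1]; exact lam_conv_graph hlax i w,
          by rw [← hw2]; exact lam_graph hlax j w⟩
      exact Λ.mono (fun x y hy => hy) _ _ h1
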